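/- Define r₁ = A₁₁ + A₁₂ + B₁, r₂ = A₂₁ + A₂₂ + B₂, and for x ∈ ℤ × ℤ set α(x) = A₁₁(x+e₁)A₂₂(x+e₂) − A₁₂(x+e₂)A₂₁(x+e₁), β₁(x) = r₁(x)A₂₂(x+e₂) − r₂(x)A₁₂(x+e₂), β₂(x) = r₂(x)A₁₁(x+e₁) − r₁(x)A₂₁(x+e₁). Suppose α(x) ≠ 0, β₁(x) ≠ 0 and β₂(x) ≠ 0 for all x ∈ ℕ × ℕ, and that the compatibility condition β₁(x)·α(x+e₂)·β₂(x+e₁) = β₂(x)·α(x+e₁)·β₁(x+e₂) holds for all x ∈ ℕ × ℕ. Then there exists a function W : ℕ × ℕ → ℝ with W(0,0) = 1 and W(x) ≠ 0 for all x, such that α(x)·W(x+e₁) = β₁(x)·W(x) and α(x)·W(x+e₂) = β₂(x)·W(x) for all x ∈ ℕ × ℕ; consequently W satisfies A₁₁(x+e₁)W(x+e₁) + A₁₂(x+e₂)W(x+e₂) = r₁(x)W(x) and A₂₁(x+e₁)W(x+e₁) + A₂₂(x+e₂)W(x+e₂) = r₂(x)W(x) for all x ∈ ℕ × ℕ. 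-/

import Mathlib

open MvPolynomial

noncomputable section

/-- Evaluation of a two-variable real polynomial at a lattice point of `ℕ × ℕ`. -/
def pevN (p : MvPolynomial (Fin 2) ℝ) (x : ℕ × ℕ) : ℝ :=
  eval (fun i => if i = 0 then (x.1 : ℝ) else (x.2 : ℝ)) p

/-- sufficiency — the compatibility condition implies the existence of a
nonvanishing weight `W` on `ℕ × ℕ` with `W(0,0) = 1` solving the first order system,
and hence making `W·𝒟` self-adjoint. -/
theorem stmt8 (A11 A12 A21 A22 B1 B2 : MvPolynomial (Fin 2) ℝ)
    (r1 r2 : MvPolynomial (Fin 2) ℝ)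
    (hr1 : r1 = A11 + A12 + B1) (hr2 : r2 = A21 + A22 + B2)
    (α β1 β2 : ℕ × ℕ → ℝ)
    (hα : ∀ x : ℕ × ℕ, α x =
      pevN A11 (x.1 + 1, x.2) * pevN A22 (x.1, x.2 + 1) -
        pevN A12 (x.1, x.2 + 1) * pevN A21 (x.1 + 1, x.2))
    (hβ1 : ∀ x : ℕ × ℕ, β1 x =
      pevN r1 x * pevN A22 (x.1, x.2 + 1) - pevN r2 x * pevN A12 (x.1, x.2 + 1))
    (hβ2 : ∀ x : ℕ × ℕ, β2 x =
      pevN r2 x * pevN A11 (x.1 + 1, x.2) - pevN r1 x * pevN A21 (x.1 + 1, x.2))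
    (hα0 : ∀ x : ℕ × ℕ, α x ≠ 0)
    (hβ10 : ∀ x : ℕ × ℕ, β1 x ≠ 0) (hβ20 : ∀ x : ℕ × ℕ, β2 x ≠ 0)
    (hcompat : ∀ x : ℕ × ℕ,
      β1 x * α (x.1, x.2 + 1) * β2 (x.1 + 1, x.2) =
        β2 x * α (x.1 + 1, x.2) * β1 (x.1, x.2 + 1)) :
    ∃ W : ℕ × ℕ → ℝ, W (0, 0) = 1 ∧ (∀ x : ℕ × ℕ, W x ≠ 0) ∧
      (∀ x : ℕ × ℕ, α x * W (x.1 + 1, x.2) = β1 x * W x) ∧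
      (∀ x : ℕ × ℕ, α x * W (x.1, x.2 + 1) = β2 x * W x) ∧
      (∀ x : ℕ × ℕ,
        pevN A11 (x.1 + 1, x.2) * W (x.1 + 1, x.2) +
          pevN A12 (x.1, x.2 + 1) * W (x.1, x.2 + 1) = pevN r1 x * W x) ∧
      (∀ x : ℕ × ℕ,
        pevN A21 (x.1 + 1, x.2) * W (x.1 + 1, x.2) +
          pevN A22 (x.1, x.2 + 1) * W (x.1, x.2 + 1) = pevN r2 x * W x) := by
  classical
  let row : ℕ → ℝ := fun m => Nat.rec (1:ℝ) (fun k v => β1 (k,0) / α (k,0) * v) m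
  let W : ℕ → ℕ → ℝ := fun m n =>
    Nat.rec (row m) (fun k v => β2 (m,k) / α (m,k) * v) n
  have hW0 : ∀ m, W m 0 = row m := fun _ => rfl
  have hWs : ∀ m n, W m (n+1) = β2 (m,n) / α (m,n) * W m n := fun _ _ => rfl
  have hrow : ∀ m, row (m+1) = β1 (m,0) / α (m,0) * row m := fun _ => rfl
  have he2 : ∀ m n, α (m,n) * W m (n+1) = β2 (m,n) * W m n := by
    intro m n
    rw [hWs]
    field_simp
    rw [mul_assoc]; exact mul_div_cancel_left₀ _ (hα0 (m,n))
  have he1 : ∀ m n, α (m,n) * W (m+1) n = β1 (m,n) * W m n := by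
    intro m n
    induction n with
    | zero =>
      show α (m,0) * row (m+1) = β1 (m,0) * row m
      rw [hrow]; field_simp
      rw [mul_assoc]; exact mul_div_cancel_left₀ _ (hα0 (m,0))
    | succ n ih =>
      apply mul_left_cancel₀ (mul_ne_zero (hα0 (m+1,n)) (hα0 (m,n)))
      have hc := hcompat (m,n)
      simp only at hc
      linear_combination (α (m,n) * α (m,n+1)) * he2 (m+1) n
        + (α (m,n+1) * β2 (m+1,n)) * ih
        + W m n * hc
        - (β1 (m,n+1) * α (m+1,n)) * he2 m n
  have hne : ∀ n m, W m n ≠ 0 := by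
    intro n
    induction n with
    | zero =>
      intro m
      rw [hW0]
      induction m with
      | zero => exact one_ne_zero
      | succ m ih =>
        rw [hrow]
        exact mul_ne_zero (div_ne_zero (hβ10 _) (hα0 _)) ih
    | succ n ih =>
      intro m
      rw [hWs]
      exact mul_ne_zero (div_ne_zero (hβ20 _) (hα0 _)) (ih m)
  refine ⟨fun x => W x.1 x.2, rfl, fun x => hne x.2 x.1, fun x => he1 x.1 x.2,
    fun x => he2 x.1 x.2, ?_, ?_⟩
  · rintro ⟨m, n⟩
    apply mul_left_cancel₀ (hα0 (m, n))
    simp only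
    linear_combination pevN A11 (m+1, n) * he1 m n + pevN A12 (m, n+1) * he2 m n
      + (pevN A11 (m+1, n) * W m n) * hβ1 (m, n)
      + (pevN A12 (m, n+1) * W m n) * hβ2 (m, n)
      - (pevN r1 (m, n) * W m n) * hα (m, n)
  · rintro ⟨m, n⟩
    apply mul_left_cancel₀ (hα0 (m, n))
    simp only
    linear_combination pevN A21 (m+1, n) * he1 m n + pevN A22 (m, n+1) * he2 m n
      + (pevN A21 (m+1, n) * W m n) * hβ1 (m, n)
      + (pevN A22 (m, n+1) * W m n) * hβ2 (m, n)
      - (pevN r2 (m, n) * W m n) * hα (m, n)
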